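/- Let X ⊆ P^N be an irreducible projective variety whose generic Hadamard rank is finite, i.e., there exists m with {p : Hrk_X(p) ≤ m} Zariski dense in P^N. Then every point x = (x_0:...:x_N) with all coordinates x_i nonzero satisfies Hrk_X(x) ≤ 2m, where Hrk_X(p) is the least number of points of X whose Hadamard product equals p. -/

import Mathlib

set_option synthInstance.maxHeartbeats 1000000
set_option maxHeartbeats 2000000

/-- The Zariski closure of a subset of affine space `ℂ^n`: the set of points on which every
polynomial vanishing identically on `S` vanishes. -/
def zariskiClosure {n : ℕ} (S : Set (Fin n → ℂ)) : Set (Fin n → ℂ) :=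
  {x | ∀ p : MvPolynomial (Fin n) ℂ, (∀ y ∈ S, MvPolynomial.eval y p = 0) →
    MvPolynomial.eval x p = 0}

/-- A set is Zariski closed if it equals its Zariski closure. -/
def IsZariskiClosed {n : ℕ} (S : Set (Fin n → ℂ)) : Prop :=
  zariskiClosure S = S

/-- Irreducibility with respect to the Zariski topology. -/
def ZariskiIrreducible {n : ℕ} (S : Set (Fin n → ℂ)) : Prop :=
  S.Nonempty ∧ ∀ C₁ C₂ : Set (Fin n → ℂ), IsZariskiClosed C₁ → IsZariskiClosed C₂ →
    S ⊆ C₁ ∪ C₂ → S ⊆ C₁ ∨ S ⊆ C₂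

/-- The Hadamard product of two subsets (affine cones over projective varieties): the Zariski
closure of the set of coordinatewise products `x ⋆ y` which are defined (i.e. nonzero). -/
def hadamardSetProd {n : ℕ} (X Y : Set (Fin n → ℂ)) : Set (Fin n → ℂ) :=
  zariskiClosure {z | ∃ x ∈ X, ∃ y ∈ Y, z = x * y ∧ x * y ≠ 0}

/-- Hadamard powers: `X^{⋆1} = X` and `X^{⋆(m+1)} = X ⋆ X^{⋆m}`. -/
def hadamardPow {n : ℕ} (X : Set (Fin n → ℂ)) : ℕ → Set (Fin n → ℂ)
  | 0 => {1}
  | 1 => X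
  | (m + 2) => hadamardSetProd X (hadamardPow X (m + 1))

/-- `p` is the Hadamard product of exactly `r` points of `X` (as projective points, i.e. up to a
nonzero scalar in the affine cone model). -/
def HadamardDecomp {n : ℕ} (X : Set (Fin n → ℂ)) (p : Fin n → ℂ) (r : ℕ) : Prop :=
  ∃ q : Fin r → (Fin n → ℂ), (∀ i, q i ∈ X) ∧
    ∃ c : ℂ, c ≠ 0 ∧ p = c • fun j => ∏ i, q i j

/-- The Hadamard rank of `p` with respect to `X` is at most `m`: `p` is the Hadamard product of
`r` points of `X` for some `1 ≤ r ≤ m`. -/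
def HadamardRankLE {n : ℕ} (X : Set (Fin n → ℂ)) (p : Fin n → ℂ) (m : ℕ) : Prop :=
  ∃ r : ℕ, 1 ≤ r ∧ r ≤ m ∧ HadamardDecomp X p r


-- ### Auxiliary machinery ###

open Polynomial in
/-- From any algebraic relation for a nonzero element of a domain, get one with nonzero
constant coefficient. -/
lemma exists_aeval_eq_zero_coeff_zero_ne_zero {R S : Type*} [CommRing R] [IsDomain R]
    [CommRing S] [IsDomain S] [Algebra R S] {d : S} (hd : d ≠ 0) :
    ∀ (n : ℕ) (p : Polynomial R), p.natDegree ≤ n → p ≠ 0 → Polynomial.aeval d p = 0 →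
      ∃ q : Polynomial R, q.coeff 0 ≠ 0 ∧ Polynomial.aeval d q = 0 := by
  intro n
  induction n with
  | zero =>
    intro p hdeg hp h0
    refine ⟨p, fun hc => hp ?_, h0⟩
    have := Polynomial.eq_C_of_natDegree_eq_zero (Nat.le_zero.mp hdeg)
    rw [this, hc, Polynomial.C_0]
  | succ n ih =>
    intro p hdeg hp h0
    by_cases hc : p.coeff 0 ≠ 0
    · exact ⟨p, hc, h0⟩
    push_neg at hc
    have hdivX : p = Polynomial.X * p.divX := by
      conv_lhs => rw [← p.X_mul_divX_add]
      rw [hc, Polynomial.C_0, add_zero]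
    have hdx0 : p.divX ≠ 0 := fun h => hp (by rw [hdivX, h, mul_zero])
    have hav : Polynomial.aeval d p.divX = 0 := by
      have h0' := h0
      rw [hdivX, map_mul, Polynomial.aeval_X] at h0'
      exact (mul_eq_zero.mp h0').resolve_left hd
    have hdeg' : p.divX.natDegree ≤ n := by
      have : p.natDegree = p.divX.natDegree + 1 := by
        conv_lhs => rw [hdivX]
        rw [mul_comm, Polynomial.natDegree_mul_X hdx0]
      omega
    exact ih p.divX hdeg' hdx0 hav


lemma exists_aeval_coeff0 {R S : Type*} [CommRing R] [IsDomain R]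
    [CommRing S] [IsDomain S] [Algebra R S] {d : S} (hd : d ≠ 0)
    (p : Polynomial R) (hp : p ≠ 0) (h0 : Polynomial.aeval d p = 0) :
      ∃ q : Polynomial R, q.coeff 0 ≠ 0 ∧ Polynomial.aeval d q = 0 :=
  exists_aeval_eq_zero_coeff_zero_ne_zero hd p.natDegree p le_rfl hp h0

section ExtLemma

open Polynomial

variable {A : Type*} [CommRing A] [IsDomain A] [Algebra ℂ A]

lemma mem_adjoin_exists_poly (B : Subalgebra ℂ A) (a : A) (z : A)
    (hz : z ∈ Algebra.adjoin ℂ ((B : Set A) ∪ {a})) :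
    ∃ Q : Polynomial B, Polynomial.aeval a Q = z := by
  induction hz using Algebra.adjoin_induction with
  | mem w hw =>
    rcases hw with hw | hw
    · exact ⟨Polynomial.C ⟨w, hw⟩, by rw [Polynomial.aeval_C]; rfl⟩
    · exact ⟨Polynomial.X, by rw [Polynomial.aeval_X, Set.mem_singleton_iff.mp hw]⟩
  | algebraMap r =>
    refine ⟨Polynomial.C (algebraMap ℂ B r), ?_⟩
    rw [Polynomial.aeval_C, ← IsScalarTower.algebraMap_apply]
  | add u v hu hv hQu hQv =>
    obtain ⟨Qu, hQu⟩ := hQu; obtain ⟨Qv, hQv⟩ := hQv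
    exact ⟨Qu + Qv, by rw [map_add (Polynomial.aeval a), hQu, hQv]⟩
  | mul u v hu hv hQu hQv =>
    obtain ⟨Qu, hQu⟩ := hQu; obtain ⟨Qv, hQv⟩ := hQv
    exact ⟨Qu * Qv, by rw [map_mul (Polynomial.aeval a), hQu, hQv]⟩

lemma onestep_alg (B : Subalgebra ℂ A) (a : A) (b' : A)
    (hb' : b' ∈ Algebra.adjoin ℂ ((B : Set A) ∪ {a})) (hb0 : b' ≠ 0)
    (P : Polynomial B) (hP0 : P ≠ 0) (hPa : Polynomial.aeval a P = 0) :
    ∃ c : B, (c : A) ≠ 0 ∧ ∀ ψ : B →ₐ[ℂ] ℂ, ψ c ≠ 0 →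
      ∃ ψ₁ : Algebra.adjoin ℂ ((B : Set A) ∪ {a}) →ₐ[ℂ] ℂ,
        (∀ (z : A) (hz : z ∈ B) (hz' : z ∈ Algebra.adjoin ℂ ((B : Set A) ∪ {a})),
          ψ₁ ⟨z, hz'⟩ = ψ ⟨z, hz⟩) ∧ ψ₁ ⟨b', hb'⟩ ≠ 0 := by
  set B' := Algebra.adjoin ℂ ((B : Set A) ∪ {a}) with hB'
  set c₁ : B := P.leadingCoeff with hc₁def
  have hc₁ : c₁ ≠ 0 := Polynomial.leadingCoeff_ne_zero.mpr hP0
  have hc₁A : (c₁ : A) ≠ 0 := fun h => hc₁ (Subtype.ext h)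
  set astar : A := (c₁ : A) * a with hastardef
  have hastar : IsIntegral B astar := by
    refine ⟨P.integralNormalization, Polynomial.monic_integralNormalization hP0, ?_⟩
    have := Polynomial.integralNormalization_eval₂_eq_zero (algebraMap B A)
      (z := a) (by rwa [Polynomial.aeval_def] at hPa)
      (fun x hx => by exact Subtype.ext hx)
    rwa [hastardef]
  set D₀ : Subalgebra B A := Algebra.adjoin B {astar} with hD₀def
  have hD₀fg : (Subalgebra.toSubmodule D₀).FG := hastar.fg_adjoin_singleton
  have hint : ∀ z ∈ D₀, IsIntegral B z := fun z hz => IsIntegral.of_mem_of_fg D₀ hD₀fg z hz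
  -- every element of B' becomes an element of D₀ after multiplying by a power of c₁
  have EXH : ∀ z ∈ B', ∃ k : ℕ, (c₁ : A) ^ k * z ∈ D₀ := by
    intro z hz
    induction hz using Algebra.adjoin_induction with
    | mem w hw =>
      rcases hw with hw | hw
      · exact ⟨0, by simpa using D₀.algebraMap_mem ⟨w, hw⟩⟩
      · refine ⟨1, by rw [Set.mem_singleton_iff.mp hw, pow_one]; exact Algebra.self_mem_adjoin_singleton B astar⟩
    | algebraMap r =>
      refine ⟨0, ?_⟩
      rw [pow_zero, one_mul, IsScalarTower.algebraMap_apply ℂ B A r]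
      exact D₀.algebraMap_mem _
    | add u v hu hv hku hkv =>
      obtain ⟨k1, hk1⟩ := hku; obtain ⟨k2, hk2⟩ := hkv
      refine ⟨k1 + k2, ?_⟩
      have : (c₁ : A) ^ (k1 + k2) * (u + v)
          = (c₁ : A) ^ k2 * ((c₁ : A) ^ k1 * u) + (c₁ : A) ^ k1 * ((c₁ : A) ^ k2 * v) := by ring
      rw [this]
      have hc₁D : (c₁ : A) ∈ D₀ := D₀.algebraMap_mem c₁
      exact add_mem (mul_mem (pow_mem hc₁D k2) hk1) (mul_mem (pow_mem hc₁D k1) hk2)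
    | mul u v hu hv hku hkv =>
      obtain ⟨k1, hk1⟩ := hku; obtain ⟨k2, hk2⟩ := hkv
      refine ⟨k1 + k2, ?_⟩
      have : (c₁ : A) ^ (k1 + k2) * (u * v)
          = ((c₁ : A) ^ k1 * u) * ((c₁ : A) ^ k2 * v) := by ring
      rw [this]; exact mul_mem hk1 hk2
  -- choice of exponent for each element of B'
  choose Tk hTk using fun (z : B') => EXH (z : A) z.2
  set dhat : D₀ := ⟨(c₁ : A) ^ (Tk ⟨b', hb'⟩) * b', hTk ⟨b', hb'⟩⟩ with hdhatdef
  have hdval : (dhat : A) ≠ 0 := mul_ne_zero (pow_ne_zero _ hc₁A) hb0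
  have hdne : dhat ≠ 0 := fun h => hdval (by rw [h]; rfl)
  have hdInt : IsIntegral B dhat :=
    (isIntegral_algHom_iff D₀.val Subtype.val_injective).mp (hint _ dhat.2)
  obtain ⟨pmon, hpmon, hpev⟩ := hdInt
  have hpne : pmon ≠ 0 := hpmon.ne_zero
  obtain ⟨q, hq0, hqd⟩ := exists_aeval_coeff0 hdne pmon hpne (by rwa [Polynomial.aeval_def])
  refine ⟨c₁ * q.coeff 0, ?_, ?_⟩
  · have : ((c₁ * q.coeff 0 : B) : A) = (c₁ : A) * ((q.coeff 0 : B) : A) := rfl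
    rw [this]
    exact mul_ne_zero hc₁A (fun h => hq0 (Subtype.ext h))
  intro ψ hψ
  rw [map_mul] at hψ
  have hψc₁ : ψ c₁ ≠ 0 := left_ne_zero_of_mul hψ
  have hψq0 : ψ (q.coeff 0) ≠ 0 := right_ne_zero_of_mul hψ
  -- kernel of ψ is maximal
  have hψsurj : Function.Surjective ψ := fun z => ⟨algebraMap ℂ B z, ψ.commutes z⟩
  haveI hmmax : (RingHom.ker ψ.toRingHom).IsMaximal :=
    RingHom.ker_isMaximal_of_surjective ψ hψsurj
  haveI : Algebra.IsIntegral B D₀ :=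
    ⟨fun x => (isIntegral_algHom_iff D₀.val Subtype.val_injective).mp (hint _ x.2)⟩
  have hkerle : RingHom.ker (algebraMap B D₀) ≤ RingHom.ker ψ.toRingHom := by
    intro x hx
    have : (algebraMap B D₀ x : A) = 0 := by
      rw [show algebraMap B D₀ x = 0 from hx]; rfl
    have hx0 : x = 0 := Subtype.ext this
    rw [hx0]; exact zero_mem _
  obtain ⟨M, hMmax, hMcomap⟩ :=
    Ideal.exists_ideal_over_maximal_of_isIntegral (RingHom.ker ψ.toRingHom) hkerle
  letI : Field (D₀ ⧸ M) := Ideal.Quotient.field M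
  set ρ : ℂ →+* (D₀ ⧸ M) :=
    (Ideal.Quotient.mk M).comp ((algebraMap B D₀).comp (algebraMap ℂ B)) with hρdef
  have hcompat : ∀ y : B, ρ (ψ y) = Ideal.Quotient.mk M (algebraMap B D₀ y) := by
    intro y
    have hker : y - algebraMap ℂ B (ψ y) ∈ RingHom.ker ψ.toRingHom := by
      simp [RingHom.mem_ker, map_sub, ψ.commutes]
    have : algebraMap B D₀ (y - algebraMap ℂ B (ψ y)) ∈ M := by
      rw [← hMcomap] at hker; exact hker
    rw [map_sub] at this
    have := (Ideal.Quotient.eq (I := M)).mpr (by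
      have : -(algebraMap B D₀ y - algebraMap B D₀ (algebraMap ℂ B (ψ y))) ∈ M := neg_mem this
      rw [neg_sub] at this; exact this)
    rw [hρdef]; exact this
  letI : Algebra ℂ (D₀ ⧸ M) := ρ.toAlgebra
  haveI : Algebra.IsIntegral ℂ (D₀ ⧸ M) := by
    constructor
    intro xbar
    obtain ⟨x, rfl⟩ := Ideal.Quotient.mk_surjective xbar
    obtain ⟨p, hpm, hpev⟩ := Algebra.IsIntegral.isIntegral (R := B) x
    refine ⟨p.map ψ.toRingHom, hpm.map _, ?_⟩
    have heq : (algebraMap ℂ (D₀ ⧸ M)).comp ψ.toRingHom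
        = (Ideal.Quotient.mk M).comp (algebraMap B D₀) := by
      ext y; exact hcompat y
    rw [Polynomial.eval₂_map, heq, ← Polynomial.hom_eval₂, hpev, map_zero]
  haveI : Nontrivial (D₀ ⧸ M) := Ideal.Quotient.nontrivial_iff.mpr hMmax.ne_top
  have hρsurj : Function.Surjective (algebraMap ℂ (D₀ ⧸ M)) :=
    IsAlgClosed.algebraMap_bijective_of_isIntegral.2
  have hρinj : Function.Injective ρ := ρ.injective
  have hiso : Function.Bijective ρ := ⟨hρinj, hρsurj⟩
  set iso : ℂ ≃+* (D₀ ⧸ M) := RingEquiv.ofBijective ρ hiso with hisodef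
  set θ : D₀ →+* ℂ := (iso.symm : (D₀ ⧸ M) →+* ℂ).comp (Ideal.Quotient.mk M) with hθdef
  have hθB : ∀ y : B, θ (algebraMap B D₀ y) = ψ y := by
    intro y
    have : Ideal.Quotient.mk M (algebraMap B D₀ y) = iso (ψ y) := (hcompat y).symm
    rw [hθdef, RingHom.comp_apply, this]
    exact iso.symm_apply_apply (ψ y)
  have hθd : θ dhat ≠ 0 := by
    intro h0
    have hdM : dhat ∈ M := by
      have : (Ideal.Quotient.mk M) dhat = 0 := by
        have := congrArg iso (show iso.symm ((Ideal.Quotient.mk M) dhat) = 0 from h0)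
        rw [iso.apply_symm_apply, map_zero] at this
        exact this
      exact (Ideal.Quotient.eq_zero_iff_mem).mp this
    -- derive ψ (q.coeff 0) = 0
    have hsplit : Polynomial.X * q.divX + Polynomial.C (q.coeff 0) = q := q.X_mul_divX_add
    have : (0 : D₀) = dhat * Polynomial.aeval dhat q.divX + algebraMap B D₀ (q.coeff 0) := by
      rw [← hqd]
      conv_lhs => rw [← hsplit]
      rw [map_add (Polynomial.aeval dhat), map_mul (Polynomial.aeval dhat),
        Polynomial.aeval_X, Polynomial.aeval_C]
    have hmem : algebraMap B D₀ (q.coeff 0) ∈ M := by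
      have h1 : dhat * Polynomial.aeval dhat q.divX ∈ M := Ideal.mul_mem_right _ _ hdM
      have := M.add_mem (M.neg_mem h1) (show dhat * Polynomial.aeval dhat q.divX
          + algebraMap B D₀ (q.coeff 0) ∈ M from this ▸ M.zero_mem)
      simpa using this
    have : q.coeff 0 ∈ RingHom.ker ψ.toRingHom := by rw [← hMcomap]; exact hmem
    exact hψq0 this
  -- define ψ₁ by clearing denominators
  have wd : ∀ (u : A) (s t : ℕ) (hs : (c₁ : A) ^ s * u ∈ D₀) (ht : (c₁ : A) ^ t * u ∈ D₀),
      θ ⟨_, hs⟩ * (ψ c₁)⁻¹ ^ s = θ ⟨_, ht⟩ * (ψ c₁)⁻¹ ^ t := by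
    intro u s t hs ht
    have hkey : (algebraMap B D₀ c₁) ^ t * ⟨_, hs⟩ = (algebraMap B D₀ c₁) ^ s * (⟨_, ht⟩ : D₀) := by
      apply Subtype.ext
      show (c₁ : A) ^ t * ((c₁ : A) ^ s * u) = (c₁ : A) ^ s * ((c₁ : A) ^ t * u)
      ring
    have := congrArg θ hkey
    rw [map_mul, map_mul, map_pow, map_pow, hθB c₁] at this
    have hst : ψ c₁ ^ s ≠ 0 := pow_ne_zero _ hψc₁
    have htt : ψ c₁ ^ t ≠ 0 := pow_ne_zero _ hψc₁
    rw [inv_pow, inv_pow, ← div_eq_mul_inv, ← div_eq_mul_inv, div_eq_div_iff hst htt]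
    linear_combination this
  have hmemmul : ∀ z w : B', (c₁ : A) ^ (Tk z + Tk w) * ((z : A) * w) ∈ D₀ := by
    intro z w
    have he : (c₁ : A) ^ (Tk z + Tk w) * ((z : A) * w)
        = ((c₁ : A) ^ Tk z * z) * ((c₁ : A) ^ Tk w * w) := by ring
    rw [he]; exact mul_mem (hTk z) (hTk w)
  have hmemadd : ∀ z w : B', (c₁ : A) ^ (Tk z + Tk w) * ((z : A) + w) ∈ D₀ := by
    intro z w
    have he : (c₁ : A) ^ (Tk z + Tk w) * ((z : A) + w)
        = (c₁ : A) ^ Tk w * ((c₁ : A) ^ Tk z * z) + (c₁ : A) ^ Tk z * ((c₁ : A) ^ Tk w * w) := by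
      ring
    rw [he]
    exact add_mem (mul_mem (pow_mem (D₀.algebraMap_mem c₁) _) (hTk z))
      (mul_mem (pow_mem (D₀.algebraMap_mem c₁) _) (hTk w))
  set θv : B' → ℂ := fun z => θ ⟨_, hTk z⟩ * (ψ c₁)⁻¹ ^ (Tk z) with hθvdef
  have hθvmul : ∀ z w : B', θv (z * w) = θv z * θv w := by
    intro z w
    have h1 : θv (z * w) = θ ⟨_, hmemmul z w⟩ * (ψ c₁)⁻¹ ^ (Tk z + Tk w) :=
      wd ((z : A) * w) (Tk (z * w)) (Tk z + Tk w) (hTk (z * w)) (hmemmul z w)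
    have h2 : (⟨_, hmemmul z w⟩ : D₀) = ⟨_, hTk z⟩ * ⟨_, hTk w⟩ := by
      apply Subtype.ext
      show (c₁ : A) ^ (Tk z + Tk w) * ((z : A) * w)
        = ((c₁ : A) ^ Tk z * z) * ((c₁ : A) ^ Tk w * w)
      ring
    rw [h1, h2, map_mul, pow_add]
    simp only [hθvdef]
    ring
  have hθvadd : ∀ z w : B', θv (z + w) = θv z + θv w := by
    intro z w
    have h1 : θv (z + w) = θ ⟨_, hmemadd z w⟩ * (ψ c₁)⁻¹ ^ (Tk z + Tk w) :=
      wd ((z : A) + w) (Tk (z + w)) (Tk z + Tk w) (hTk (z + w)) (hmemadd z w)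
    have h2 : (⟨_, hmemadd z w⟩ : D₀)
        = (algebraMap B D₀ c₁) ^ Tk w * ⟨_, hTk z⟩ + (algebraMap B D₀ c₁) ^ Tk z * ⟨_, hTk w⟩ := by
      apply Subtype.ext
      show (c₁ : A) ^ (Tk z + Tk w) * ((z : A) + w)
        = (c₁ : A) ^ Tk w * ((c₁ : A) ^ Tk z * z) + (c₁ : A) ^ Tk z * ((c₁ : A) ^ Tk w * w)
      ring
    rw [h1, h2, map_add, map_mul, map_mul, map_pow, map_pow, hθB c₁]
    simp only [hθvdef]
    have hst : ψ c₁ ^ Tk z ≠ 0 := pow_ne_zero _ hψc₁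
    have htt : ψ c₁ ^ Tk w ≠ 0 := pow_ne_zero _ hψc₁
    have e1 : ψ c₁ ^ Tk w * (ψ c₁)⁻¹ ^ Tk w = 1 := by rw [← mul_pow, mul_inv_cancel₀ hψc₁, one_pow]
    have e2 : ψ c₁ ^ Tk z * (ψ c₁)⁻¹ ^ Tk z = 1 := by rw [← mul_pow, mul_inv_cancel₀ hψc₁, one_pow]
    linear_combination (θ ⟨_, hTk z⟩ * (ψ c₁)⁻¹ ^ Tk z) * e1 + (θ ⟨_, hTk w⟩ * (ψ c₁)⁻¹ ^ Tk w) * e2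
  have hθvone : θv 1 = 1 := by
    have h2 : (⟨_, hTk 1⟩ : D₀) = (algebraMap B D₀ c₁) ^ Tk (1 : B') := by
      apply Subtype.ext
      show (c₁ : A) ^ Tk (1 : B') * ((1 : B') : A) = (c₁ : A) ^ Tk (1 : B')
      rw [OneMemClass.coe_one, mul_one]
    simp only [hθvdef, h2, map_pow, hθB c₁, inv_pow]
    exact mul_inv_cancel₀ (pow_ne_zero _ hψc₁)
  have hθvzero : θv 0 = 0 := by
    have h2 : (⟨_, hTk 0⟩ : D₀) = 0 := by
      apply Subtype.ext
      show (c₁ : A) ^ Tk (0 : B') * ((0 : B') : A) = ((0 : D₀) : A)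
      rw [ZeroMemClass.coe_zero, mul_zero, ZeroMemClass.coe_zero]
    simp only [hθvdef, h2, map_zero, zero_mul]
  have hres : ∀ (w : A) (hw : w ∈ B) (hw' : w ∈ B'), θv ⟨w, hw'⟩ = ψ ⟨w, hw⟩ := by
    intro w hw hw'
    have h0 : (c₁ : A) ^ 0 * w ∈ D₀ := by
      rw [pow_zero, one_mul]; exact D₀.algebraMap_mem ⟨w, hw⟩
    have h1 : θv ⟨w, hw'⟩ = θ ⟨_, h0⟩ * (ψ c₁)⁻¹ ^ 0 :=
      wd w (Tk ⟨w, hw'⟩) 0 (hTk ⟨w, hw'⟩) h0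
    have h2 : (⟨_, h0⟩ : D₀) = algebraMap B D₀ ⟨w, hw⟩ := by
      apply Subtype.ext
      show (c₁ : A) ^ 0 * w = w
      rw [pow_zero, one_mul]
    rw [h1, h2, hθB, pow_zero, mul_one]
  have hcomm : ∀ r : ℂ, θv (algebraMap ℂ B' r) = r := by
    intro r
    have hmem : algebraMap ℂ A r ∈ B := B.algebraMap_mem r
    have hmem' : algebraMap ℂ A r ∈ B' := B'.algebraMap_mem r
    have heq : algebraMap ℂ B' r = ⟨algebraMap ℂ A r, hmem'⟩ := rfl
    rw [heq, hres _ hmem hmem']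
    have : (⟨algebraMap ℂ A r, hmem⟩ : B) = algebraMap ℂ B r :=
      Subtype.ext (IsScalarTower.algebraMap_apply ℂ B A r).symm
    rw [this, ψ.commutes]
    exact Algebra.algebraMap_self_apply r
  let ψ₁rh : B' →+* ℂ :=
    { toFun := θv
      map_one' := hθvone
      map_mul' := hθvmul
      map_zero' := hθvzero
      map_add' := hθvadd }
  refine ⟨{ toRingHom := ψ₁rh, commutes' := fun r => (hcomm r).trans (Algebra.algebraMap_self_apply r).symm }, ?_, ?_⟩
  · intro z hz hz'
    exact hres z hz hz'
  · show θv ⟨b', hb'⟩ ≠ 0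
    simp only [hθvdef]
    exact mul_ne_zero hθd (pow_ne_zero _ (inv_ne_zero hψc₁))

lemma onestep_trans (B : Subalgebra ℂ A) (a : A) (b' : A)
    (hb' : b' ∈ Algebra.adjoin ℂ ((B : Set A) ∪ {a})) (hb0 : b' ≠ 0)
    (hAT : ¬ ∃ P : Polynomial B, P ≠ 0 ∧ Polynomial.aeval a P = 0) :
    ∃ c : B, (c : A) ≠ 0 ∧ ∀ ψ : B →ₐ[ℂ] ℂ, ψ c ≠ 0 →
      ∃ ψ₁ : Algebra.adjoin ℂ ((B : Set A) ∪ {a}) →ₐ[ℂ] ℂ,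
        (∀ (z : A) (hz : z ∈ B) (hz' : z ∈ Algebra.adjoin ℂ ((B : Set A) ∪ {a})),
          ψ₁ ⟨z, hz'⟩ = ψ ⟨z, hz⟩) ∧ ψ₁ ⟨b', hb'⟩ ≠ 0 := by
  set B' := Algebra.adjoin ℂ ((B : Set A) ∪ {a}) with hB'
  push_neg at hAT
  have hker : ∀ Q : Polynomial B, Polynomial.aeval a Q = 0 → Q = 0 := by
    intro Q hQ
    by_contra h
    exact (hAT Q h) hQ
  have hinj : Function.Injective (fun Q : Polynomial B => Polynomial.aeval a Q) := by
    intro Q1 Q2 h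
    have h' : Polynomial.aeval a Q1 = Polynomial.aeval a Q2 := h
    have : Polynomial.aeval a (Q1 - Q2) = 0 := by
      rw [map_sub (Polynomial.aeval a) Q1 Q2, h', sub_self]
    exact sub_eq_zero.mp (hker _ this)
  choose rep hrep using fun z : B' => mem_adjoin_exists_poly B a (z : A) z.2
  obtain ⟨Q, hQrep⟩ : ∃ Q, rep ⟨b', hb'⟩ = Q := ⟨_, rfl⟩
  have hQb : Polynomial.aeval a Q = b' := by rw [← hQrep]; exact hrep ⟨b', hb'⟩
  have hQ0 : Q ≠ 0 := fun h => hb0 (by rw [← hQb, h, map_zero])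
  have hlc : ((Q.leadingCoeff : B) : A) ≠ 0 :=
    fun h => (Polynomial.leadingCoeff_ne_zero.mpr hQ0) (Subtype.ext h)
  refine ⟨Q.leadingCoeff, hlc, ?_⟩
  intro ψ hψ
  set qbar : Polynomial ℂ := Q.map ψ.toRingHom with hqbardef
  have hqbar0 : qbar ≠ 0 := by
    intro h
    apply hψ
    have hcz : qbar.coeff Q.natDegree = 0 := by rw [h]; simp
    rw [hqbardef, Polynomial.coeff_map] at hcz
    exact hcz
  obtain ⟨t, ht⟩ : ∃ t : ℂ, qbar.eval t ≠ 0 := by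
    by_contra h
    push_neg at h
    apply hqbar0
    apply Polynomial.eq_zero_of_infinite_isRoot qbar
    have huniv : {x : ℂ | qbar.IsRoot x} = Set.univ := Set.eq_univ_of_forall h
    rw [huniv]
    exact Set.infinite_univ
  set Φ : Polynomial B → ℂ := fun Q' => Polynomial.eval t (Q'.map ψ.toRingHom) with hΦdef
  set θv : B' → ℂ := fun z => Φ (rep z) with hθvdef
  have hrepchar : ∀ (z : B') (Q' : Polynomial B), Polynomial.aeval a Q' = (z : A) →
      rep z = Q' := by
    intro z Q' hQ'
    apply hinj
    show Polynomial.aeval a (rep z) = Polynomial.aeval a Q'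
    rw [hrep z, hQ']
  have hθvone : θv 1 = 1 := by
    have h1 : rep 1 = 1 := hrepchar 1 1 (by rw [map_one]; rfl)
    show Polynomial.eval t ((rep 1).map ψ.toRingHom) = 1
    rw [h1, Polynomial.map_one, Polynomial.eval_one]
  have hθvzero : θv 0 = 0 := by
    have h1 : rep 0 = 0 := hrepchar 0 0 (by rw [map_zero]; rfl)
    show Polynomial.eval t ((rep 0).map ψ.toRingHom) = 0
    rw [h1, Polynomial.map_zero, Polynomial.eval_zero]
  have hθvmul : ∀ z w : B', θv (z * w) = θv z * θv w := by
    intro z w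
    have h1 : rep (z * w) = rep z * rep w := by
      apply hrepchar
      rw [map_mul (Polynomial.aeval a) (rep z) (rep w), hrep z, hrep w]
      exact (Subalgebra.coe_mul B' z w).symm
    show Polynomial.eval t ((rep (z * w)).map ψ.toRingHom)
      = Polynomial.eval t ((rep z).map ψ.toRingHom) * Polynomial.eval t ((rep w).map ψ.toRingHom)
    rw [h1, Polynomial.map_mul, Polynomial.eval_mul]
  have hθvadd : ∀ z w : B', θv (z + w) = θv z + θv w := by
    intro z w
    have h1 : rep (z + w) = rep z + rep w := by
      apply hrepchar
      rw [map_add (Polynomial.aeval a) (rep z) (rep w), hrep z, hrep w]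
      exact (Subalgebra.coe_add B' z w).symm
    show Polynomial.eval t ((rep (z + w)).map ψ.toRingHom)
      = Polynomial.eval t ((rep z).map ψ.toRingHom) + Polynomial.eval t ((rep w).map ψ.toRingHom)
    rw [h1, Polynomial.map_add, Polynomial.eval_add]
  have hres : ∀ (w : A) (hw : w ∈ B) (hw' : w ∈ B'), θv ⟨w, hw'⟩ = ψ ⟨w, hw⟩ := by
    intro w hw hw'
    have h1 : rep ⟨w, hw'⟩ = Polynomial.C ⟨w, hw⟩ := by
      apply hrepchar
      rw [Polynomial.aeval_C]; rfl
    show Polynomial.eval t ((rep ⟨w, hw'⟩).map ψ.toRingHom) = ψ ⟨w, hw⟩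
    rw [h1, Polynomial.map_C, Polynomial.eval_C]
    rfl
  have hcomm : ∀ r : ℂ, θv (algebraMap ℂ B' r) = r := by
    intro r
    have hmem : algebraMap ℂ A r ∈ B := B.algebraMap_mem r
    have hmem' : algebraMap ℂ A r ∈ B' := B'.algebraMap_mem r
    have heq : algebraMap ℂ B' r = ⟨algebraMap ℂ A r, hmem'⟩ := rfl
    rw [heq, hres _ hmem hmem']
    have : (⟨algebraMap ℂ A r, hmem⟩ : B) = algebraMap ℂ B r :=
      Subtype.ext (IsScalarTower.algebraMap_apply ℂ B A r).symm
    rw [this, ψ.commutes]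
    exact Algebra.algebraMap_self_apply r
  let ψ₁rh : B' →+* ℂ :=
    { toFun := θv
      map_one' := hθvone
      map_mul' := hθvmul
      map_zero' := hθvzero
      map_add' := hθvadd }
  refine ⟨{ toRingHom := ψ₁rh, commutes' := fun r => (hcomm r).trans (Algebra.algebraMap_self_apply r).symm }, ?_, ?_⟩
  · intro z hz hz'
    exact hres z hz hz'
  · show Polynomial.eval t ((rep ⟨b', hb'⟩).map ψ.toRingHom) ≠ 0
    rw [hQrep]
    exact ht


/-- One-step extension. -/
lemma onestep (B : Subalgebra ℂ A) (a : A) (b' : A)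
    (hb' : b' ∈ Algebra.adjoin ℂ ((B : Set A) ∪ {a})) (hb0 : b' ≠ 0) :
    ∃ c : B, (c : A) ≠ 0 ∧ ∀ ψ : B →ₐ[ℂ] ℂ, ψ c ≠ 0 →
      ∃ ψ₁ : Algebra.adjoin ℂ ((B : Set A) ∪ {a}) →ₐ[ℂ] ℂ,
        (∀ (z : A) (hz : z ∈ B) (hz' : z ∈ Algebra.adjoin ℂ ((B : Set A) ∪ {a})),
          ψ₁ ⟨z, hz'⟩ = ψ ⟨z, hz⟩) ∧ ψ₁ ⟨b', hb'⟩ ≠ 0 := by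
  by_cases hAT : ∃ P : Polynomial B, P ≠ 0 ∧ Polynomial.aeval a P = 0
  · obtain ⟨P, hP0, hPa⟩ := hAT
    exact onestep_alg B a b' hb' hb0 P hP0 hPa
  · exact onestep_trans B a b' hb' hb0 hAT

/-- Extension lemma: a finitely generated domain over `ℂ`; homomorphisms to `ℂ` defined on a
subalgebra extend after inverting a single nonzero element, keeping a nonzero element nonzero. -/
lemma ext_lemma (s : Finset A) :
    ∀ (B : Subalgebra ℂ A), (∀ x : A, x ∈ Algebra.adjoin ℂ ((B : Set A) ∪ (s : Set A))) →
    ∀ (b : A), b ≠ 0 →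
    ∃ c : B, (c : A) ≠ 0 ∧ ∀ ψ : B →ₐ[ℂ] ℂ, ψ c ≠ 0 →
      ∃ ψ' : A →ₐ[ℂ] ℂ, (∀ y : B, ψ' y = ψ y) ∧ ψ' b ≠ 0 := by
  classical
  induction s using Finset.induction_on with
  | empty =>
    intro B hgen b hb
    have hBtop : B = ⊤ := by
      rw [eq_top_iff]
      intro x _
      have := hgen x
      rw [Finset.coe_empty, Set.union_empty, Algebra.adjoin_eq] at this
      exact this
    subst hBtop
    refine ⟨⟨b, trivial⟩, hb, ?_⟩
    intro ψ hψ
    refine ⟨ψ.comp ((Subalgebra.topEquiv (R := ℂ) (A := A)).symm.toAlgHom), ?_, ?_⟩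
    · intro y
      have : ((Subalgebra.topEquiv (R := ℂ) (A := A)).symm.toAlgHom) (y : A) = y :=
        Subtype.ext rfl
      simp only [AlgHom.comp_apply, this]
    · have : ((Subalgebra.topEquiv (R := ℂ) (A := A)).symm.toAlgHom) b = ⟨b, trivial⟩ :=
        Subtype.ext rfl
      simpa [AlgHom.comp_apply, this] using hψ
  | @insert a t ha ih =>
    intro B hgen b hb
    set B' := Algebra.adjoin ℂ ((B : Set A) ∪ {a}) with hB'def
    have hgen' : ∀ x : A, x ∈ Algebra.adjoin ℂ ((B' : Set A) ∪ (t : Set A)) := by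
      intro x
      have hx := hgen x
      have hmono : Algebra.adjoin ℂ ((B : Set A) ∪ (insert a t : Finset A))
          ≤ Algebra.adjoin ℂ ((B' : Set A) ∪ (t : Set A)) := by
        apply Algebra.adjoin_le
        intro z hz
        rcases hz with hz | hz
        · exact Algebra.subset_adjoin (Or.inl (Algebra.subset_adjoin (Or.inl hz)))
        · rw [Finset.coe_insert] at hz
          rcases hz with rfl | hz
          · exact Algebra.subset_adjoin (Or.inl (Algebra.subset_adjoin (Or.inr rfl)))
          · exact Algebra.subset_adjoin (Or.inr hz)
      exact hmono hx
    obtain ⟨c', hc'0, hc'⟩ := ih B' hgen' b hb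
    obtain ⟨c, hc0, hc⟩ := onestep B a (c' : A) c'.2 hc'0
    refine ⟨c, hc0, ?_⟩
    intro ψ hψ
    obtain ⟨ψ₁, hψ₁res, hψ₁c'⟩ := hc ψ hψ
    have hψ₁c'' : ψ₁ c' ≠ 0 := by
      have : (⟨(c' : A), c'.2⟩ : B') = c' := Subtype.ext rfl
      rwa [this] at hψ₁c'
    obtain ⟨ψ', hψ'res, hψ'b⟩ := hc' ψ₁ hψ₁c''
    refine ⟨ψ', ?_, hψ'b⟩
    intro y
    have hyB' : (y : A) ∈ B' := Algebra.subset_adjoin (Or.inl y.2)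
    have h1 : ψ' (y : A) = ψ₁ ⟨(y : A), hyB'⟩ := hψ'res ⟨(y : A), hyB'⟩
    rw [h1, hψ₁res (y : A) y.2 hyB']

end ExtLemma

open MvPolynomial

/-- Composition rule for `eval` and `aeval` on multivariate polynomials. -/
lemma eval_aeval' {σ τ : Type*} (F : σ → MvPolynomial τ ℂ) (z : τ → ℂ) (p : MvPolynomial σ ℂ) :
    MvPolynomial.eval z (MvPolynomial.aeval F p)
      = MvPolynomial.eval (fun s => MvPolynomial.eval z (F s)) p := by
  have h : (MvPolynomial.eval z).comp (MvPolynomial.aeval F).toRingHom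
      = MvPolynomial.eval (fun s => MvPolynomial.eval z (F s)) := by
    apply MvPolynomial.ringHom_ext
    · intro r; simp
    · intro i; simp
  exact RingHom.congr_fun h p

lemma aeval_toRingHom_eq_eval {τ : Type*} (y : τ → ℂ) (p : MvPolynomial τ ℂ) :
    (MvPolynomial.aeval y : MvPolynomial τ ℂ →ₐ[ℂ] ℂ) p = MvPolynomial.eval y p := by
  have h : ((MvPolynomial.aeval y : MvPolynomial τ ℂ →ₐ[ℂ] ℂ) : MvPolynomial τ ℂ →+* ℂ)
      = MvPolynomial.eval y := by
    apply MvPolynomial.ringHom_ext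
    · intro r; simp
    · intro i; simp
  exact RingHom.congr_fun h p

/-- A nonzero multivariate polynomial over ℂ has a point where it does not vanish. -/
lemma exists_eval_ne_zero' {σ : Type*} (p : MvPolynomial σ ℂ) (hp : p ≠ 0) :
    ∃ z : σ → ℂ, MvPolynomial.eval z p ≠ 0 := by
  by_contra h
  push_neg at h
  exact hp (MvPolynomial.funext (fun z => by rw [h z, map_zero]))

section Prod

variable {N : ℕ} (X : Set (Fin (N + 1) → ℂ))

/-- rows-in-X set. -/
def rowSet (r : ℕ) : Set (Fin r × Fin (N + 1) → ℂ) :=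
  {q | ∀ i : Fin r, (fun j => q (i, j)) ∈ X}

lemma X_prime (hclosed : IsZariskiClosed X) (hirr : ZariskiIrreducible X)
    (f g : MvPolynomial (Fin (N + 1)) ℂ) (hfg : ∀ y ∈ X, MvPolynomial.eval y (f * g) = 0) :
    (∀ y ∈ X, MvPolynomial.eval y f = 0) ∨ (∀ y ∈ X, MvPolynomial.eval y g = 0) := by
  have hcl : ∀ h : MvPolynomial (Fin (N + 1)) ℂ,
      IsZariskiClosed {y | MvPolynomial.eval y h = 0} := by
    intro h
    apply Set.eq_of_subset_of_subset
    · intro z hz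
      exact hz h (fun y hy => hy)
    · intro z hz p hp
      exact hp z hz
  have hcover : X ⊆ {y | MvPolynomial.eval y f = 0} ∪ {y | MvPolynomial.eval y g = 0} := by
    intro y hy
    have := hfg y hy
    rw [map_mul] at this
    rcases mul_eq_zero.mp this with h | h
    · exact Or.inl h
    · exact Or.inr h
  rcases hirr.2 _ _ (hcl f) (hcl g) hcover with h | h
  · exact Or.inl (fun y hy => h hy)
  · exact Or.inr (fun y hy => h hy)

/-- vanishing ideal of the product set is prime (key irreducibility input). -/
lemma rowSet_prime (hclosed : IsZariskiClosed X) (hirr : ZariskiIrreducible X) :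
    ∀ r : ℕ, ∀ f g : MvPolynomial (Fin r × Fin (N + 1)) ℂ,
      (∀ q ∈ rowSet X r, MvPolynomial.eval q (f * g) = 0) →
      (∀ q ∈ rowSet X r, MvPolynomial.eval q f = 0) ∨
      (∀ q ∈ rowSet X r, MvPolynomial.eval q g = 0) := by
  intro r
  induction r with
  | zero =>
    intro f g hfg
    have hall : ∀ q : Fin 0 × Fin (N + 1) → ℂ, q ∈ rowSet X 0 := fun q i => i.elim0
    have : f * g = 0 := MvPolynomial.funext (fun z => by rw [hfg z (hall z), map_zero])
    rcases mul_eq_zero.mp this with h | h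
    · exact Or.inl (fun q _ => by rw [h, map_zero])
    · exact Or.inr (fun q _ => by rw [h, map_zero])
  | succ r ih =>
    intro f g hfg
    -- gluing a first row y with a tail z
    set glue : (Fin (N + 1) → ℂ) → (Fin r × Fin (N + 1) → ℂ) → (Fin (r + 1) × Fin (N + 1) → ℂ)
      := fun y z p => Fin.cases (y p.2) (fun i' => z (i', p.2)) p.1 with hglue
    have hgluemem : ∀ y ∈ X, ∀ z ∈ rowSet X r, ∀ w, w = glue y z → w ∈ rowSet X (r + 1) := by
      rintro y hy z hz w rfl i
      refine Fin.cases ?_ ?_ i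
      · have : (fun j => glue y z (0, j)) = y := by
          funext j; simp [hglue]
        rw [this]; exact hy
      · intro i'
        have : (fun j => glue y z (i'.succ, j)) = fun j => z (i', j) := by
          funext j; simp [hglue]
        rw [this]; exact hz i'
    have hgluesurj : ∀ w ∈ rowSet X (r + 1), ∃ y ∈ X, ∃ z ∈ rowSet X r, glue y z = w := by
      intro w hw
      refine ⟨fun j => w (0, j), hw 0, fun p => w (p.1.succ, p.2), fun i => hw i.succ, ?_⟩
      funext p
      obtain ⟨i, j⟩ := p
      refine Fin.cases ?_ ?_ i
      · simp [hglue]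
      · intro i'; simp [hglue]
    -- substitutions
    set sub1 : (Fin r × Fin (N + 1) → ℂ) → (Fin (r + 1) × Fin (N + 1)) →
        MvPolynomial (Fin (N + 1)) ℂ
      := fun z p => Fin.cases (MvPolynomial.X p.2) (fun i' => MvPolynomial.C (z (i', p.2))) p.1
      with hsub1
    set sub2 : (Fin (N + 1) → ℂ) → (Fin (r + 1) × Fin (N + 1)) →
        MvPolynomial (Fin r × Fin (N + 1)) ℂ
      := fun y p => Fin.cases (MvPolynomial.C (y p.2)) (fun i' => MvPolynomial.X (i', p.2)) p.1
      with hsub2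
    have E1 : ∀ (z : Fin r × Fin (N + 1) → ℂ) (y : Fin (N + 1) → ℂ)
        (p : MvPolynomial (Fin (r + 1) × Fin (N + 1)) ℂ),
        MvPolynomial.eval y (MvPolynomial.aeval (sub1 z) p) = MvPolynomial.eval (glue y z) p := by
      intro z y p
      have hfun : (fun s => MvPolynomial.eval y (sub1 z s)) = glue y z := by
        funext s
        obtain ⟨i, j⟩ := s
        refine Fin.cases ?_ ?_ i
        · simp [hsub1, hglue]
        · intro i'; simp [hsub1, hglue]
      rw [eval_aeval', hfun]
    have E2 : ∀ (y : Fin (N + 1) → ℂ) (z : Fin r × Fin (N + 1) → ℂ)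
        (p : MvPolynomial (Fin (r + 1) × Fin (N + 1)) ℂ),
        MvPolynomial.eval z (MvPolynomial.aeval (sub2 y) p) = MvPolynomial.eval (glue y z) p := by
      intro y z p
      have hfun : (fun s => MvPolynomial.eval z (sub2 y s)) = glue y z := by
        funext s
        obtain ⟨i, j⟩ := s
        refine Fin.cases ?_ ?_ i
        · simp [hsub2, hglue]
        · intro i'; simp [hsub2, hglue]
      rw [eval_aeval', hfun]
    -- main dichotomy over the tail variable
    have hdich : (∀ z ∈ rowSet X r, ∀ y ∈ X, MvPolynomial.eval (glue y z) f = 0)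
        ∨ (∀ z ∈ rowSet X r, ∀ y ∈ X, MvPolynomial.eval (glue y z) g = 0) := by
      by_contra hcon
      push_neg at hcon
      obtain ⟨⟨z1, hz1, y1, hy1, hv1⟩, ⟨z2, hz2, y2, hy2, hv2⟩⟩ := hcon
      set p1 := MvPolynomial.aeval (sub2 y1) f with hp1
      set p2 := MvPolynomial.aeval (sub2 y2) g with hp2
      have hvan : ∀ z ∈ rowSet X r, MvPolynomial.eval z (p1 * p2) = 0 := by
        intro z hz
        -- slice at z : polynomials in the first row
        have hsl : ∀ y ∈ X, MvPolynomial.eval y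
            ((MvPolynomial.aeval (sub1 z) f) * (MvPolynomial.aeval (sub1 z) g)) = 0 := by
          intro y hy
          rw [← map_mul (MvPolynomial.aeval (sub1 z)), E1]
          exact hfg _ (hgluemem y hy z hz _ rfl)
        rcases X_prime X hclosed hirr _ _ hsl with h | h
        · have : MvPolynomial.eval z p1 = 0 := by
            rw [hp1, E2]
            have := h y1 hy1
            rw [E1] at this
            exact this
          rw [map_mul, this, zero_mul]
        · have : MvPolynomial.eval z p2 = 0 := by
            rw [hp2, E2]
            have := h y2 hy2
            rw [E1] at this
            exact this
          rw [map_mul, this, mul_zero]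
      rcases ih p1 p2 hvan with h | h
      · have := h z1 hz1
        rw [hp1, E2] at this
        exact hv1 this
      · have := h z2 hz2
        rw [hp2, E2] at this
        exact hv2 this
    rcases hdich with h | h
    · refine Or.inl ?_
      intro w hw
      obtain ⟨y, hy, z, hz, rfl⟩ := hgluesurj w hw
      exact h z hz y hy
    · refine Or.inr ?_
      intro w hw
      obtain ⟨y, hy, z, hz, rfl⟩ := hgluesurj w hw
      exact h z hz y hy

end Prod

section Extraction

variable {N : ℕ} (X : Set (Fin (N + 1) → ℂ))

/-- Key extraction: if products of `r` rows of `X` are Zariski dense, then every point in a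
principal open set is exactly such a product. -/
lemma extraction (hclosed : IsZariskiClosed X) (hirr : ZariskiIrreducible X) (r : ℕ)
    (hdr : ∀ g : MvPolynomial (Fin (N + 1)) ℂ,
      (∀ q ∈ rowSet X r, MvPolynomial.eval (fun j => ∏ i : Fin r, q (i, j)) g = 0) → g = 0) :
    ∃ f : MvPolynomial (Fin (N + 1)) ℂ, f ≠ 0 ∧
      ∀ y : Fin (N + 1) → ℂ, MvPolynomial.eval y f ≠ 0 →
        ∃ q : Fin r → (Fin (N + 1) → ℂ), (∀ i, q i ∈ X) ∧ (fun j => ∏ i, q i j) = y := by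
  classical
  set σ := (Fin r × Fin (N + 1)) with hσ
  set S := rowSet X r with hS
  set P : Ideal (MvPolynomial σ ℂ) := MvPolynomial.vanishingIdeal ℂ S with hP
  have hmemP : ∀ p : MvPolynomial σ ℂ, p ∈ P ↔ ∀ q ∈ S, MvPolynomial.eval q p = 0 := by
    intro p; rw [MvPolynomial.mem_vanishingIdeal_iff]; simp only [aeval_toRingHom_eq_eval]; exact Iff.rfl
  obtain ⟨x0, hx0⟩ := hirr.1
  have hSne : (fun s : σ => x0 s.2) ∈ S := fun i => hx0
  haveI hPprime : P.IsPrime := by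
    constructor
    · intro htop
      have h1 : (1 : MvPolynomial σ ℂ) ∈ P := htop ▸ Submodule.mem_top
      have := (hmemP 1).mp h1 _ hSne
      rw [map_one] at this
      exact one_ne_zero this
    · intro f g hfg
      have h := rowSet_prime X hclosed hirr r f g ((hmemP (f * g)).mp hfg)
      rcases h with h | h
      · exact Or.inl ((hmemP f).mpr h)
      · exact Or.inr ((hmemP g).mpr h)
  set A := MvPolynomial σ ℂ ⧸ P with hA
  set G : Fin (N + 1) → MvPolynomial σ ℂ := fun j => ∏ i : Fin r, MvPolynomial.X (i, j) with hG
  set φ : MvPolynomial (Fin (N + 1)) ℂ →ₐ[ℂ] A :=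
    (Ideal.Quotient.mkₐ ℂ P).comp (MvPolynomial.aeval G) with hφ
  have hGeval : ∀ (q : σ → ℂ), (fun j => MvPolynomial.eval q (G j))
      = fun j => ∏ i : Fin r, q (i, j) := by
    intro q
    funext j
    rw [hG, map_prod]
    simp
  have hφinj : Function.Injective φ := by
    rw [injective_iff_map_eq_zero]
    intro p hp
    have hmem : MvPolynomial.aeval G p ∈ P := by
      rwa [hφ, AlgHom.comp_apply, Ideal.Quotient.mkₐ_eq_mk, Ideal.Quotient.eq_zero_iff_mem] at hp
    apply hdr
    intro q hq
    have := (hmemP _).mp hmem q hq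
    rw [eval_aeval', hGeval q] at this
    exact this
  -- generators of A
  set sgens : Finset A := Finset.univ.image (fun s : σ => Ideal.Quotient.mkₐ ℂ P (MvPolynomial.X s))
    with hsgens
  have hgentop : Algebra.adjoin ℂ (sgens : Set A) = ⊤ := by
    have h1 : (sgens : Set A) = Set.range (fun s : σ => Ideal.Quotient.mkₐ ℂ P (MvPolynomial.X s)) := by
      rw [hsgens, Finset.coe_image, Finset.coe_univ, Set.image_univ]
    have h2 : Set.range (fun s : σ => Ideal.Quotient.mkₐ ℂ P (MvPolynomial.X s))
        = (Ideal.Quotient.mkₐ ℂ P) '' (Set.range (MvPolynomial.X : σ → MvPolynomial σ ℂ)) := by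
      rw [← Set.range_comp]; rfl
    rw [h1, h2, ← AlgHom.map_adjoin, MvPolynomial.adjoin_range_X, Algebra.map_top,
      AlgHom.range_eq_top]
    exact Ideal.Quotient.mkₐ_surjective ℂ P
  set B₀ : Subalgebra ℂ A := φ.range with hB₀
  have hgen : ∀ z : A, z ∈ Algebra.adjoin ℂ ((B₀ : Set A) ∪ (sgens : Set A)) := by
    intro z
    have : (⊤ : Subalgebra ℂ A) ≤ Algebra.adjoin ℂ ((B₀ : Set A) ∪ (sgens : Set A)) := by
      rw [← hgentop]
      exact Algebra.adjoin_mono Set.subset_union_right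
    exact this (by trivial)
  haveI : Nontrivial A := Ideal.Quotient.nontrivial_iff.mpr hPprime.ne_top
  obtain ⟨c, hc0, hext⟩ := ext_lemma sgens B₀ hgen 1 one_ne_zero
  obtain ⟨f, hf⟩ := c.2
  have hfne : f ≠ 0 := by
    intro h
    apply hc0
    rw [← hf, h, map_zero]
  refine ⟨f, hfne, ?_⟩
  intro y hy
  set e : MvPolynomial (Fin (N + 1)) ℂ ≃ₐ[ℂ] B₀ := AlgEquiv.ofInjective φ hφinj with he
  set ψy : B₀ →ₐ[ℂ] ℂ := (MvPolynomial.aeval y : MvPolynomial (Fin (N + 1)) ℂ →ₐ[ℂ] ℂ).comp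
    (e.symm.toAlgHom) with hψy
  have hesymm : ∀ p : MvPolynomial (Fin (N + 1)) ℂ, e.symm ⟨φ p, ⟨p, rfl⟩⟩ = p := by
    intro p
    apply e.injective
    rw [AlgEquiv.apply_symm_apply]
    apply Subtype.ext
    rw [he]
    exact (AlgEquiv.ofInjective_apply φ hφinj p).symm
  have hψyc : ψy c ≠ 0 := by
    have hc : c = ⟨φ f, ⟨f, rfl⟩⟩ := Subtype.ext hf.symm
    rw [hψy, AlgHom.comp_apply, hc]
    show (MvPolynomial.aeval y) (e.symm ⟨φ f, ⟨f, rfl⟩⟩) ≠ 0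
    rw [hesymm f, aeval_toRingHom_eq_eval]
    exact hy
  obtain ⟨ψ', hψ'res, _⟩ := hext ψy hψyc
  set q : σ → ℂ := fun s => ψ' (Ideal.Quotient.mkₐ ℂ P (MvPolynomial.X s)) with hq
  have hkey : ∀ p : MvPolynomial σ ℂ, MvPolynomial.eval q p = ψ' (Ideal.Quotient.mkₐ ℂ P p) := by
    intro p
    have huniq : ψ'.comp (Ideal.Quotient.mkₐ ℂ P) = MvPolynomial.aeval q :=
      (MvPolynomial.aeval_unique (ψ'.comp (Ideal.Quotient.mkₐ ℂ P)))
    have h2 : MvPolynomial.eval q p = (MvPolynomial.aeval q : MvPolynomial σ ℂ →ₐ[ℂ] ℂ) p :=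
      (aeval_toRingHom_eq_eval q p).symm
    rw [h2, ← huniq]
    rfl
  have hqzero : ∀ p ∈ P, MvPolynomial.eval q p = 0 := by
    intro p hp
    rw [hkey p, Ideal.Quotient.mkₐ_eq_mk, Ideal.Quotient.eq_zero_iff_mem.mpr hp, map_zero]
  -- q has rows in X
  have hrows : ∀ i : Fin r, (fun j => q (i, j)) ∈ X := by
    intro i
    have hXcl : zariskiClosure X = X := hclosed
    rw [← hXcl]
    intro p hp
    have hrename : MvPolynomial.rename (fun j => (i, j)) p ∈ P := by
      rw [hmemP]
      intro w hw
      rw [MvPolynomial.eval_rename]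
      exact hp _ (hw i)
    have := hqzero _ hrename
    rw [MvPolynomial.eval_rename] at this
    exact this
  refine ⟨fun i j => q (i, j), hrows, ?_⟩
  funext j
  have h1 : ∏ i : Fin r, q (i, j) = MvPolynomial.eval q (G j) := by
    rw [hG, map_prod]; simp
  have h2 : Ideal.Quotient.mkₐ ℂ P (G j) = φ (MvPolynomial.X j) := by
    rw [hφ, AlgHom.comp_apply]
    congr 1
    rw [MvPolynomial.aeval_X]
  have h3 : ψ' (φ (MvPolynomial.X j)) = ψy ⟨φ (MvPolynomial.X j), ⟨_, rfl⟩⟩ :=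
    hψ'res ⟨φ (MvPolynomial.X j), ⟨_, rfl⟩⟩
  rw [h1, hkey, h2, h3, hψy, AlgHom.comp_apply]
  show (MvPolynomial.aeval y) (e.symm ⟨φ (MvPolynomial.X j), ⟨_, rfl⟩⟩) = y j
  rw [hesymm, MvPolynomial.aeval_X]

end Extraction

lemma exp_le_totalDegree' {σ : Type*} {f : MvPolynomial σ ℂ} {α : σ →₀ ℕ}
    (hα : α ∈ f.support) (j : σ) : α j ≤ f.totalDegree := by
  by_cases h : α j = 0
  · rw [h]; exact Nat.zero_le _
  · have hj : j ∈ α.support := Finsupp.mem_support_iff.mpr h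
    have h1 : α j ≤ α.sum fun _ e => e := by
      rw [Finsupp.sum]
      exact Finset.single_le_sum (fun i _ => Nat.zero_le _) hj
    exact le_trans h1 (MvPolynomial.le_totalDegree hα)

/-- Let `X ⊆ ℙ^N` be an irreducible projective variety (affine cone model) whose
generic Hadamard rank is finite: for some `m ≥ 1` the points of Hadamard `X`-rank at most `m`
are Zariski dense.  Then every point `x` with all coordinates nonzero satisfies
`Hrk_X(x) ≤ 2m`. -/
theorem maxHadamardRank_le_two_mul_generic (N : ℕ) (X : Set (Fin (N + 1) → ℂ))
    (hclosed : IsZariskiClosed X) (hirr : ZariskiIrreducible X)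
    (hcone : ∀ c : ℂ, c ≠ 0 → ∀ x ∈ X, c • x ∈ X)
    (m : ℕ) (hm : 1 ≤ m)
    (hdense : zariskiClosure {p | HadamardRankLE X p m} = Set.univ) :
    ∀ x : Fin (N + 1) → ℂ, (∀ i, x i ≠ 0) → HadamardRankLE X x (2 * m) := by
  classical
  intro x hx
  have hdensepoint : ∀ g : MvPolynomial (Fin (N + 1)) ℂ,
      (∀ p, HadamardRankLE X p m → MvPolynomial.eval p g = 0) → g = 0 := by
    intro g hg
    apply MvPolynomial.funext
    intro z
    rw [map_zero]
    have hz : z ∈ zariskiClosure {p | HadamardRankLE X p m} := by rw [hdense]; trivial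
    exact hz g hg
  have hdecomp_row : ∀ (r' : ℕ), 1 ≤ r' → ∀ p, HadamardDecomp X p r' →
      ∃ q ∈ rowSet X r', (fun j => ∏ i : Fin r', q (i, j)) = p := by
    intro r' hr' p hd
    obtain ⟨q, hq, c, hc, rfl⟩ := hd
    set i0 : Fin r' := ⟨0, hr'⟩ with hi0
    set q' : Fin r' → Fin (N + 1) → ℂ := Function.update q i0 (c • q i0) with hq'
    refine ⟨fun s => q' s.1 s.2, ?_, ?_⟩
    · intro i
      show q' i ∈ X
      by_cases h : i = i0
      · subst h
        rw [hq', Function.update_self]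
        exact hcone c hc _ (hq i0)
      · rw [hq', Function.update_of_ne h]
        exact hq i
    · funext j
      have hsplit : ∀ (F : Fin r' → ℂ), ∏ i, F i = F i0 * ∏ i ∈ Finset.univ.erase i0, F i :=
        fun F => (Finset.mul_prod_erase Finset.univ F (Finset.mem_univ i0)).symm
      have hsame : ∀ i ∈ Finset.univ.erase i0, q' i j = q i j := by
        intro i hi
        rw [hq', Function.update_of_ne (Finset.ne_of_mem_erase hi)]
      have h0 : q' i0 j = c * q i0 j := by
        rw [hq', Function.update_self]
        rfl
      have hL : ∏ i, q' i j = c * ∏ i, q i j := by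
        rw [hsplit (fun i => q' i j), Finset.prod_congr rfl hsame, h0, mul_assoc,
          Finset.mul_prod_erase Finset.univ (fun i => q i j) (Finset.mem_univ i0)]
      have hR : (c • fun j => ∏ i, q i j) j = c * ∏ i, q i j := rfl
      rw [hR]
      exact hL
  have hsel : ∃ r : ℕ, 1 ≤ r ∧ r ≤ m ∧ ∀ g : MvPolynomial (Fin (N + 1)) ℂ,
      (∀ q ∈ rowSet X r, MvPolynomial.eval (fun j => ∏ i : Fin r, q (i, j)) g = 0) → g = 0 := by
    by_contra hcon
    push_neg at hcon
    have hmemT : ∀ u : {z // z ∈ Finset.Icc 1 m}, 1 ≤ u.1 ∧ u.1 ≤ m :=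
      fun u => Finset.mem_Icc.mp u.2
    choose g hgvan hgne using
      fun (u : {z // z ∈ Finset.Icc 1 m}) => hcon u.1 (hmemT u).1 (hmemT u).2
    set T := (Finset.Icc 1 m).attach with hT
    set gg := ∏ u ∈ T, g u with hgg
    have hggne : gg ≠ 0 := Finset.prod_ne_zero_iff.mpr (fun u _ => hgne u)
    apply hggne
    apply hdensepoint
    intro p hp
    obtain ⟨r', h1, h2, hdec⟩ := hp
    obtain ⟨qrow, hqrow, hqprod⟩ := hdecomp_row r' h1 p hdec
    rw [hgg, map_prod]
    apply Finset.prod_eq_zero (Finset.mem_attach (Finset.Icc 1 m) ⟨r', Finset.mem_Icc.mpr ⟨h1, h2⟩⟩)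
    have := hgvan ⟨r', Finset.mem_Icc.mpr ⟨h1, h2⟩⟩ qrow hqrow
    rw [hqprod] at this
    exact this
  obtain ⟨r, hr1, hrm, hdr⟩ := hsel
  obtain ⟨f, hfne, hfpt⟩ := extraction X hclosed hirr r hdr
  set d := f.totalDegree with hd
  set F2 : MvPolynomial (Fin (N + 1)) ℂ := ∑ α ∈ f.support,
    MvPolynomial.monomial (Finsupp.equivFunOnFinite.symm (fun j => d - α j))
      (f.coeff α * ∏ j, x j ^ α j) with hF2
  have hF2eval : ∀ z : Fin (N + 1) → ℂ, (∀ j, z j ≠ 0) →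
      MvPolynomial.eval z F2 = (∏ j, z j) ^ d * MvPolynomial.eval (fun j => x j / z j) f := by
    intro z hz
    rw [hF2, map_sum, MvPolynomial.eval_eq', Finset.mul_sum]
    apply Finset.sum_congr rfl
    intro α hα
    rw [MvPolynomial.eval_monomial]
    have hprod : (Finsupp.prod (Finsupp.equivFunOnFinite.symm (fun j => d - α j))
        (fun n e => z n ^ e)) = ∏ j, z j ^ (d - α j) := by
      rw [Finsupp.prod_fintype]
      · simp
      · intro i; rw [pow_zero]
    rw [hprod]
    have hle : ∀ j, α j ≤ d := fun j => exp_le_totalDegree' hα j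
    have hterm : ∀ j : Fin (N + 1), x j ^ α j * z j ^ (d - α j)
        = z j ^ d * (x j / z j) ^ α j := by
      intro j
      have hzj := hz j
      have h2 : (x j / z j) ^ α j * z j ^ α j = x j ^ α j := by
        rw [div_pow, div_mul_cancel₀ _ (pow_ne_zero (α j) hzj)]
      calc x j ^ α j * z j ^ (d - α j)
          = ((x j / z j) ^ α j * z j ^ α j) * z j ^ (d - α j) := by rw [h2]
        _ = z j ^ d * (x j / z j) ^ α j := by
            rw [mul_assoc, ← pow_add]
            have hle2 := hle j
            have h3 : α j + (d - α j) = d := by omega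
            rw [h3, mul_comm]
    calc (f.coeff α * ∏ j, x j ^ α j) * ∏ j, z j ^ (d - α j)
        = f.coeff α * ∏ j, (x j ^ α j * z j ^ (d - α j)) := by
          rw [mul_assoc, ← Finset.prod_mul_distrib]
      _ = f.coeff α * ∏ j, (z j ^ d * (x j / z j) ^ α j) := by
          rw [Finset.prod_congr rfl (fun j _ => hterm j)]
      _ = (∏ j, z j) ^ d * (f.coeff α * ∏ j, (x j / z j) ^ α j) := by
          rw [Finset.prod_mul_distrib, ← Finset.prod_pow]
          ring
  have hXprodne : (∏ j, MvPolynomial.X j : MvPolynomial (Fin (N + 1)) ℂ) ≠ 0 :=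
    Finset.prod_ne_zero_iff.mpr (fun j _ => MvPolynomial.X_ne_zero j)
  have hF2ne : F2 ≠ 0 := by
    obtain ⟨w, hw⟩ := exists_eval_ne_zero' (f * ∏ j, MvPolynomial.X j)
      (mul_ne_zero hfne hXprodne)
    rw [map_mul, map_prod] at hw
    have hwf : MvPolynomial.eval w f ≠ 0 := left_ne_zero_of_mul hw
    have hwX : ∀ j, w j ≠ 0 := by
      intro j h0
      apply right_ne_zero_of_mul hw
      apply Finset.prod_eq_zero (Finset.mem_univ j)
      rw [MvPolynomial.eval_X, h0]
    intro hF20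
    set z := fun j => x j / w j with hzdef
    have hzne : ∀ j, z j ≠ 0 := fun j => div_ne_zero (hx j) (hwX j)
    have hev := hF2eval z hzne
    rw [hF20, map_zero] at hev
    have hxz : (fun j => x j / z j) = w := by
      funext j
      rw [hzdef]
      show x j / (x j / w j) = w j
      rw [div_div_eq_mul_div, mul_comm, mul_div_assoc, div_self (hx j), mul_one]
    rw [hxz] at hev
    exact (mul_ne_zero (pow_ne_zero _ (Finset.prod_ne_zero_iff.mpr (fun j _ => hzne j))) hwf)
      hev.symm
  obtain ⟨y, hy⟩ := exists_eval_ne_zero' (f * (F2 * ∏ j, MvPolynomial.X j))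
    (mul_ne_zero hfne (mul_ne_zero hF2ne hXprodne))
  rw [map_mul, map_mul, map_prod] at hy
  have hyf : MvPolynomial.eval y f ≠ 0 := left_ne_zero_of_mul hy
  have hyF2 : MvPolynomial.eval y F2 ≠ 0 := left_ne_zero_of_mul (right_ne_zero_of_mul hy)
  have hyX : ∀ j, y j ≠ 0 := by
    intro j h0
    apply right_ne_zero_of_mul (right_ne_zero_of_mul hy)
    apply Finset.prod_eq_zero (Finset.mem_univ j)
    rw [MvPolynomial.eval_X, h0]
  set y' := fun j => x j / y j with hy'def
  have hy'f : MvPolynomial.eval y' f ≠ 0 := by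
    intro h0
    apply hyF2
    rw [hF2eval y hyX]
    show (∏ j, y j) ^ d * MvPolynomial.eval (fun j => x j / y j) f = 0
    rw [show (fun j => x j / y j) = y' from rfl, h0, mul_zero]
  obtain ⟨Q, hQmem, hQprod⟩ := hfpt y hyf
  obtain ⟨Q', hQ'mem, hQ'prod⟩ := hfpt y' hy'f
  refine ⟨r + r, by omega, by omega, Fin.append Q Q', ?_, 1, one_ne_zero, ?_⟩
  · intro i
    refine Fin.addCases (motive := fun i => Fin.append Q Q' i ∈ X) (fun l => ?_) (fun l => ?_) i
    · show Fin.append Q Q' (Fin.castAdd r l) ∈ X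
      rw [Fin.append_left]
      exact hQmem l
    · show Fin.append Q Q' (Fin.natAdd r l) ∈ X
      rw [Fin.append_right]
      exact hQ'mem l
  · funext j
    have h1 : ∏ i : Fin (r + r), Fin.append Q Q' i j
        = (∏ l : Fin r, Q l j) * (∏ l : Fin r, Q' l j) := by
      rw [Fin.prod_univ_add]
      congr 1
      · apply Finset.prod_congr rfl
        intro l _
        rw [Fin.append_left]
      · apply Finset.prod_congr rfl
        intro l _
        rw [Fin.append_right]
    show x j = (1 : ℂ) * ∏ i : Fin (r + r), Fin.append Q Q' i j
    rw [one_mul, h1, congrFun hQprod j, congrFun hQ'prod j]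
    show x j = y j * (x j / y j)
    rw [mul_comm, div_mul_cancel₀ _ (hyX j)]
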